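/- For every integer k and every natural number m, the following two identities hold: Σ_{i=0}^{2m} (−1)^i·V_{2k+2i}² = d_m·V_{2k+2m}² − 2·p²·Δ·b_{m−1}, and Σ_{i=0}^{2m+1} (−1)^i·V_{2k+2i}² = p²·Δ·c_m·(1 − a_{k+m+1}·V_{2k+2m}). -/

import Mathlib

lemma twosided (s : ℤ) (G : ℤ → ℤ) (hrec : ∀ t : ℤ, G (t+1) = s * G t - G (t-1))
    (h0 : G 0 = 0) (h1 : G 1 = 0) : ∀ t : ℤ, G t = 0 := by
  have key : ∀ t : ℤ, G t = 0 ∧ G (t+1) = 0 := by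
    intro t
    induction t using Int.induction_on with
    | zero => exact ⟨h0, h1⟩
    | succ n ih =>
      refine ⟨ih.2, ?_⟩
      have h := hrec ((n:ℤ)+1)
      rw [show ((n:ℤ)+1-1) = n by ring] at h
      linear_combination h + s*ih.2 - ih.1
    | pred n ih =>
      refine ⟨?_, by rw [show (-(n:ℤ)-1+1) = -(n:ℤ) by ring]; exact ih.1⟩
      have h := hrec (-(n:ℤ))
      linear_combination h + s*ih.1 - ih.2
  exact fun t => (key t).1

lemma step2V (p q : ℤ) (V : ℤ → ℤ) (hq2 : q*q = 1)
    (hVrec : ∀ n : ℤ, V n = p * V (n-1) - q * V (n-2)) :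
    ∀ n : ℤ, V (n+2) = (p^2-2*q) * V n - V (n-2) := by
  intro n
  have h1 := hVrec (n+2); have h2 := hVrec (n+1); have h3 := hVrec n
  ring_nf at h1 h2 h3 ⊢
  linear_combination h1 + p*h2 + q*h3 - V (-2+n) * hq2


lemma LUV (p q : ℤ) (U V : ℤ → ℤ) (hq2 : q*q = 1)
    (hU0 : U 0 = 0) (hU1 : U 1 = 1)
    (hUrec : ∀ n : ℤ, U n = p * U (n - 1) - q * U (n - 2))
    (hV0 : V 0 = 2) (hV1 : V 1 = p)
    (hVrec : ∀ n : ℤ, V n = p * V (n - 1) - q * V (n - 2)) :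
    ∀ n : ℤ, p*(p^2-4*q)*U n = V (n+2) - V (n-2) := by
  have hVm1 : V (-1) = p*q := by
    have h := hVrec 1; norm_num at h
    rw [hV1, hV0] at h
    linear_combination q*h - V (-1) * hq2
  have hVm2 : V (-2) = p^2 - 2*q := by
    have h := hVrec 0; norm_num at h
    rw [hV0, hVm1] at h
    linear_combination q*h + (p^2 - V (-2)) * hq2
  have hV2 : V 2 = p^2 - 2*q := by
    have h := hVrec 2; norm_num at h
    rw [hV1, hV0] at h; linarith
  have hV3 : V 3 = p^3 - 3*p*q := by
    have h := hVrec 3; norm_num at h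
    rw [hV2, hV1] at h; linarith
  have key : ∀ n : ℤ, (p*(p^2-4*q)*U n = V (n+2) - V (n-2)) ∧
      (p*(p^2-4*q)*U (n+1) = V (n+3) - V (n-1)) := by
    intro n
    induction n using Int.induction_on with
    | zero =>
      constructor
      · norm_num [hU0, hV2, hVm2]
      · norm_num [hU1, hV3, hVm1]; ring
    | succ n ih =>
      obtain ⟨ih1, ih2⟩ := ih
      refine ⟨by ring_nf; ring_nf at ih2; exact ih2, ?_⟩
      have hu := hUrec (n+2)
      have hv1 := hVrec (n+4)
      have hv2 := hVrec n
      ring_nf at hu hv1 hv2 ih1 ih2 ⊢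
      linear_combination p*(p^2-4*q)*hu + p*ih2 - q*ih1 - hv1 + hv2
    | pred n ih =>
      obtain ⟨ih1, ih2⟩ := ih
      refine ⟨?_, by ring_nf; ring_nf at ih1; exact ih1⟩
      have hu := hUrec (-n+1)
      have hv1 := hVrec (-n+3)
      have hv2 := hVrec (-n-1)
      ring_nf at hu hv1 hv2 ih1 ih2 ⊢
      linear_combination (q*p*(p^2-4*q))*hu + (q*p)*ih1 - q*ih2 - q*hv1 + q*hv2 -
        (p*(p^2-4*q)*U (-1-(n:ℤ)) - V (1-(n:ℤ)) + V (-3-(n:ℤ))) * hq2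
  exact fun n => (key n).1

set_option linter.unusedSectionVars false

section prods
variable (p q : ℤ) (U V : ℤ → ℤ) (hq2 : q*q = 1)
  (hV0 : V 0 = 2) (hV1 : V 1 = p)
  (hVrec : ∀ n : ℤ, V n = p * V (n - 1) - q * V (n - 2))

include hq2 hV0 hV1 hVrec

lemma hV2 : V 2 = p^2 - 2*q := by
  have h := hVrec 2; norm_num at h; rw [hV1, hV0] at h; linarith

lemma LP : ∀ (x t : ℤ), V (x + 2*t) + V (x - 2*t) = V x * V (2*t) := by
  intro x t
  have LA := step2V p q V hq2 hVrec
  have key := twosided (p^2-2*q) (fun t : ℤ => V (x + 2*t) + V (x - 2*t) - V x * V (2*t))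
    ?_ ?_ ?_ t
  · linarith [key]
  · intro t
    have A1 := LA (x+2*t); have A2 := LA (x-2*t); have A3 := LA (2*t)
    ring_nf at A1 A2 A3 ⊢
    linear_combination A1 + A2 - V x * A3
  · norm_num [hV0]; ring
  · have A := LA x
    have h2 := hV2 p q V hq2 hV0 hV1 hVrec
    norm_num
    linear_combination A - V x * h2

lemma LPU (hUrec : ∀ n : ℤ, U n = p * U (n - 1) - q * U (n - 2)) :
    ∀ (x t : ℤ), U (x + 2*t) + U (x - 2*t) = U x * V (2*t) := by
  intro x t
  have LA := step2V p q V hq2 hVrec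
  have LAU := step2V p q U hq2 hUrec
  have key := twosided (p^2-2*q) (fun t : ℤ => U (x + 2*t) + U (x - 2*t) - U x * V (2*t))
    ?_ ?_ ?_ t
  · linarith [key]
  · intro t
    have A1 := LAU (x+2*t); have A2 := LAU (x-2*t); have A3 := LA (2*t)
    ring_nf at A1 A2 A3 ⊢
    linear_combination A1 + A2 - U x * A3
  · norm_num [hV0]; ring
  · have A := LAU x
    have h2 := hV2 p q V hq2 hV0 hV1 hVrec
    norm_num
    linear_combination A - U x * h2

lemma LPUU (hU0 : U 0 = 0) (hU1 : U 1 = 1)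
    (hUrec : ∀ n : ℤ, U n = p * U (n - 1) - q * U (n - 2)) :
    ∀ (x t : ℤ), (p^2-4*q) * (U x * U (2*t)) = V (x + 2*t) - V (x - 2*t) := by
  intro x t
  have LA := step2V p q V hq2 hVrec
  have LAU := step2V p q U hq2 hUrec
  have hU2 : U 2 = p := by
    have h := hUrec 2; norm_num at h; rw [hU1, hU0] at h; linarith
  have luv := LUV p q U V hq2 hU0 hU1 hUrec hV0 hV1 hVrec x
  have key := twosided (p^2-2*q)
    (fun t : ℤ => (p^2-4*q) * (U x * U (2*t)) - V (x + 2*t) + V (x - 2*t)) ?_ ?_ ?_ t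
  · linarith [key]
  · intro t
    have A1 := LA (x+2*t); have A2 := LA (x-2*t); have A3 := LAU (2*t)
    ring_nf at A1 A2 A3 ⊢
    linear_combination (p^2-4*q) * U x * A3 - A1 + A2
  · norm_num [hU0]
  · norm_num
    linear_combination ((p^2-4*q) * U x) * hU2 + luv

end prods

theorem stmt_18 (p q : ℤ) (hp : p ≠ 0) (hq : q = 1 ∨ q = -1)
    (hΔ : p ^ 2 - 4 * q ≠ 0)
    (U V : ℤ → ℤ)
    (hU0 : U 0 = 0) (hU1 : U 1 = 1)
    (hUrec : ∀ n : ℤ, U n = p * U (n - 1) - q * U (n - 2))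
    (hV0 : V 0 = 2) (hV1 : V 1 = p)
    (hVrec : ∀ n : ℤ, V n = p * V (n - 1) - q * V (n - 2))
    (a : ℤ → ℤ) (ha : ∀ n : ℤ, p * a n = U (2 * n))
    (c d : ℤ → ℤ) (hc : ∀ n : ℤ, U 4 * c n = U (4 * n + 4)) (hd : ∀ n : ℤ, V 2 * d n = V (4 * n + 2))
    (b : ℤ → ℤ) (hb : ∀ n : ℤ, p ^ 2 * (p ^ 2 - 4 * q) * b n = d (n + 1) - 1)
    (k : ℤ) (m : ℕ) :
    (∑ i ∈ Finset.range (2 * m + 1), (-1 : ℤ) ^ i * V (2 * k + 2 * i) ^ 2) =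
        d m * V (2 * k + 2 * m) ^ 2 - 2 * p ^ 2 * (p ^ 2 - 4 * q) * b ((m : ℤ) - 1) ∧
      (∑ i ∈ Finset.range (2 * m + 2), (-1 : ℤ) ^ i * V (2 * k + 2 * i) ^ 2) =
        p ^ 2 * (p ^ 2 - 4 * q) * c m * (1 - a (k + m + 1) * V (2 * k + 2 * m)) := by
  have hq2 : q * q = 1 := by rcases hq with h | h <;> rw [h] <;> norm_num
  have hs0 : p ^ 2 - 2 * q ≠ 0 := by
    have hcs : p ≤ -2 ∨ p = -1 ∨ p = 1 ∨ 2 ≤ p := by omega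
    rcases hq with h | h <;> rw [h] <;>
      rcases hcs with h' | h' | h' | h' <;> first
        | (rw [h']; norm_num)
        | (intro hcon; nlinarith)
  have hV2' : V 2 = p ^ 2 - 2 * q := hV2 p q V hq2 hV0 hV1 hVrec
  have hU2' : U 2 = p := by
    have h := hUrec 2; norm_num at h; rw [hU1, hU0] at h; linarith
  have hU3' : U 3 = p ^ 2 - q := by
    have h := hUrec 3; norm_num at h; rw [hU2', hU1] at h; linarith
  have hU4' : U 4 = p ^ 3 - 2 * p * q := by
    have h := hUrec 4; norm_num at h; rw [hU3', hU2'] at h; linarith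
  have lp := LP p q V hq2 hV0 hV1 hVrec
  have lpu := LPU p q U V hq2 hV0 hV1 hVrec hUrec
  have lpuu := LPUU p q U V hq2 hV0 hV1 hVrec hU0 hU1 hUrec
  -- the telescoped sum formula
  have sumV : ∀ N : ℕ, (p ^ 2 - 2 * q) *
      (∑ i ∈ Finset.range N, (-1 : ℤ) ^ i * V (2 * k + 2 * i) ^ 2) =
      V (4 * k - 2) - (-1 : ℤ) ^ N * V (4 * k + 4 * (N : ℤ) - 2) +
        (∑ i ∈ Finset.range N, (-1 : ℤ) ^ i) * (2 * (p ^ 2 - 2 * q)) := by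
    intro N
    induction N with
    | zero => simp
    | succ N ih =>
      rw [Finset.sum_range_succ, Finset.sum_range_succ]
      have key : (p ^ 2 - 2 * q) * V (2 * k + 2 * (N : ℤ)) ^ 2 =
          V (4 * k + 4 * (N : ℤ) - 2) + V (4 * k + 4 * (N : ℤ) + 2) + 2 * (p ^ 2 - 2 * q) := by
        have l1 := lp (2 * k + 2 * (N : ℤ)) (k + (N : ℤ))
        rw [show 2 * k + 2 * (N : ℤ) + 2 * (k + (N : ℤ)) = 4 * k + 4 * (N : ℤ) by ring,
          show 2 * k + 2 * (N : ℤ) - 2 * (k + (N : ℤ)) = (0 : ℤ) by ring,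
          show 2 * (k + (N : ℤ)) = 2 * k + 2 * (N : ℤ) by ring, hV0] at l1
        have l2 := lp (4 * k + 4 * (N : ℤ)) 1
        rw [show 4 * k + 4 * (N : ℤ) + 2 * 1 = 4 * k + 4 * (N : ℤ) + 2 by ring,
          show 4 * k + 4 * (N : ℤ) - 2 * 1 = 4 * k + 4 * (N : ℤ) - 2 by ring,
          show (2 * 1 : ℤ) = 2 by norm_num, hV2'] at l2
        linear_combination (-(p ^ 2 - 2 * q)) * l1 - l2
      push_cast
      rw [show 4 * k + 4 * ((N : ℤ) + 1) - 2 = 4 * k + 4 * (N : ℤ) + 2 by ring]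
      linear_combination ih + ((-1 : ℤ) ^ N) * key
  constructor
  · -- even case
    refine mul_left_cancel₀ hs0 ?_
    have sum1 := sumV (2 * m + 1)
    have hodd : Odd (2 * m + 1) := ⟨m, by ring⟩
    rw [neg_one_geom_sum, if_neg (Nat.not_even_iff_odd.2 hodd), hodd.neg_one_pow] at sum1
    push_cast at sum1
    rw [show 4 * k + 4 * (2 * (m : ℤ) + 1) - 2 = 4 * k + 8 * (m : ℤ) + 2 by ring] at sum1
    have hdm := hd (m : ℤ)
    rw [hV2'] at hdm
    have hbm := hb ((m : ℤ) - 1)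
    rw [show ((m : ℤ) - 1 + 1) = (m : ℤ) by ring] at hbm
    have l1 := lp (2 * k + 2 * (m : ℤ)) (k + (m : ℤ))
    rw [show 2 * k + 2 * (m : ℤ) + 2 * (k + (m : ℤ)) = 4 * k + 4 * (m : ℤ) by ring,
      show 2 * k + 2 * (m : ℤ) - 2 * (k + (m : ℤ)) = (0 : ℤ) by ring,
      show 2 * (k + (m : ℤ)) = 2 * k + 2 * (m : ℤ) by ring, hV0] at l1
    have l2 := lp (4 * k + 4 * (m : ℤ)) (2 * (m : ℤ) + 1)
    rw [show 4 * k + 4 * (m : ℤ) + 2 * (2 * (m : ℤ) + 1) = 4 * k + 8 * (m : ℤ) + 2 by ring,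
      show 4 * k + 4 * (m : ℤ) - 2 * (2 * (m : ℤ) + 1) = 4 * k - 2 by ring,
      show 2 * (2 * (m : ℤ) + 1) = 4 * (m : ℤ) + 2 by ring] at l2
    linear_combination sum1 + (2 * (p ^ 2 - 2 * q)) * hbm +
      (2 - V (2 * k + 2 * (m : ℤ)) ^ 2) * hdm + l2 + V (4 * (m : ℤ) + 2) * l1
  · -- odd case
    have hM : (p ^ 2 * (p ^ 2 - 2 * q)) * (p ^ 2 - 4 * q) ≠ 0 :=
      mul_ne_zero (mul_ne_zero (pow_ne_zero 2 hp) hs0) hΔ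
    refine mul_left_cancel₀ hM ?_
    have sum2 := sumV (2 * m + 2)
    have heven : Even (2 * m + 2) := ⟨m + 1, by ring⟩
    rw [neg_one_geom_sum, if_pos heven, heven.neg_one_pow] at sum2
    push_cast at sum2
    rw [show 4 * k + 4 * (2 * (m : ℤ) + 2) - 2 = 4 * k + 8 * (m : ℤ) + 6 by ring] at sum2
    have hcm := hc (m : ℤ)
    rw [hU4'] at hcm
    have ham := ha (k + (m : ℤ) + 1)
    rw [show 2 * (k + (m : ℤ) + 1) = 2 * k + 2 * (m : ℤ) + 2 by ring] at ham
    have l3 := lpu (2 * k + 2 * (m : ℤ) + 2) (k + (m : ℤ))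
    rw [show 2 * k + 2 * (m : ℤ) + 2 + 2 * (k + (m : ℤ)) = 4 * k + 4 * (m : ℤ) + 2 by ring,
      show 2 * k + 2 * (m : ℤ) + 2 - 2 * (k + (m : ℤ)) = (2 : ℤ) by ring,
      show 2 * (k + (m : ℤ)) = 2 * k + 2 * (m : ℤ) by ring, hU2'] at l3
    have l4 := lpuu (4 * k + 4 * (m : ℤ) + 2) (2 * (m : ℤ) + 2)
    rw [show 4 * k + 4 * (m : ℤ) + 2 + 2 * (2 * (m : ℤ) + 2) = 4 * k + 8 * (m : ℤ) + 6 by ring,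
      show 4 * k + 4 * (m : ℤ) + 2 - 2 * (2 * (m : ℤ) + 2) = 4 * k - 2 by ring,
      show 2 * (2 * (m : ℤ) + 2) = 4 * (m : ℤ) + 4 by ring] at l4
    have f5 : p * (1 - a (k + (m : ℤ) + 1) * V (2 * k + 2 * (m : ℤ))) =
        -(U (4 * k + 4 * (m : ℤ) + 2)) := by
      linear_combination (-(V (2 * k + 2 * (m : ℤ)))) * ham + l3
    linear_combination (p ^ 2 * (p ^ 2 - 4 * q)) * sum2 + (p ^ 2 * (p ^ 2 - 4 * q)) * l4 -
      (p ^ 2 * (p ^ 2 - 4 * q) ^ 2 * U (4 * (m : ℤ) + 4)) * f5 -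
      (p ^ 3 * (p ^ 2 - 4 * q) ^ 2 *
        (1 - a (k + (m : ℤ) + 1) * V (2 * k + 2 * (m : ℤ)))) * hcm
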